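/- Let R(t,g) be defined for t > 0 by R(t,g) = g/2 + κ√t·M_0(g²/(2t)) when g ≤ γ√t and R(t,g) = γ√t/2 when g ≥ γ√t, where κ = 1/(√(2π)·erfi(γ/√2)) and γ is the unique positive root of x ↦ M_0(x²/2). Then for fixed t > 0, the function g ↦ R(t,g) is non-decreasing and concave on [0, ∞), and R(t,g) ≤ γ√t/2 for all g ≥ 0. -/

import Mathlib

open Real

noncomputable def erfi (x : ℝ) : ℝ := (2 / Real.sqrt π) * ∫ z in (0:ℝ)..x, Real.exp (z ^ 2)

noncomputable def M0 (u : ℝ) : ℝ := Real.exp u - Real.sqrt (π * u) * erfi (Real.sqrt u)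

noncomputable def kappa (γ : ℝ) : ℝ := 1 / (Real.sqrt (2 * π) * erfi (γ / Real.sqrt 2))

noncomputable def R (γ t g : ℝ) : ℝ :=
  if t = 0 then 0
  else if g ≤ γ * Real.sqrt t then g / 2 + kappa γ * Real.sqrt t * M0 (g ^ 2 / (2 * t))
  else γ * Real.sqrt t / 2

lemma erfi_zero : erfi 0 = 0 := by simp [erfi]

lemma erfi_hasDerivAt (x : ℝ) :
    HasDerivAt erfi (2 / Real.sqrt π * Real.exp (x ^ 2)) x := by
  have hc : Continuous fun z : ℝ => Real.exp (z ^ 2) := by continuity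
  have h : HasDerivAt (fun y => ∫ z in (0:ℝ)..y, Real.exp (z ^ 2)) (Real.exp (x ^ 2)) x :=
    (hc.integral_hasStrictDerivAt 0 x).hasDerivAt
  exact h.const_mul (2 / Real.sqrt π)

lemma erfi_strictMono : StrictMono erfi :=
  strictMono_of_hasDerivAt_pos (fun x => erfi_hasDerivAt x) (fun x => by
    have : (0:ℝ) < Real.sqrt π := Real.sqrt_pos.2 Real.pi_pos
    positivity)

lemma erfi_continuous : Continuous erfi :=
  Differentiable.continuous fun x => (erfi_hasDerivAt x).differentiableAt

lemma M0_eq (u : ℝ) :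
    M0 u = Real.exp u - Real.sqrt π * (Real.sqrt u * erfi (Real.sqrt u)) := by
  rw [M0, Real.sqrt_mul Real.pi_pos.le, mul_assoc]

lemma M0_continuous : Continuous M0 := by
  have : M0 = fun u => Real.exp u - Real.sqrt π * (Real.sqrt u * erfi (Real.sqrt u)) :=
    funext M0_eq
  rw [this]
  exact Real.continuous_exp.sub
    (continuous_const.mul (Real.continuous_sqrt.mul (erfi_continuous.comp Real.continuous_sqrt)))

lemma M0_hasDerivAt {u : ℝ} (hu : 0 < u) :
    HasDerivAt M0 (-(Real.sqrt π / (2 * Real.sqrt u) * erfi (Real.sqrt u))) u := by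
  have hsu : Real.sqrt u ≠ 0 := (Real.sqrt_pos.2 hu).ne'
  have hsπ : Real.sqrt π ≠ 0 := (Real.sqrt_pos.2 Real.pi_pos).ne'
  have h1 : HasDerivAt Real.sqrt (1 / (2 * Real.sqrt u)) u := Real.hasDerivAt_sqrt hu.ne'
  have h2 : HasDerivAt (fun v => erfi (Real.sqrt v))
      (2 / Real.sqrt π * Real.exp u * (1 / (2 * Real.sqrt u))) u := by
    have := (erfi_hasDerivAt (Real.sqrt u)).comp u h1
    rwa [Real.sq_sqrt hu.le] at this
  have h3 := h1.mul h2
  have h4 := (Real.hasDerivAt_exp u).sub (h3.const_mul (Real.sqrt π))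
  have heq : M0 = fun v => Real.exp v - Real.sqrt π * (Real.sqrt v * erfi (Real.sqrt v)) :=
    funext M0_eq
  rw [heq]
  refine h4.congr_deriv ?_
  field_simp
  ring

/-- The smooth branch of `R`. -/
noncomputable def fAux (γ t g : ℝ) : ℝ :=
  g / 2 + kappa γ * Real.sqrt t * M0 (g ^ 2 / (2 * t))

/-- The derivative of the smooth branch. -/
noncomputable def fdAux (γ t g : ℝ) : ℝ :=
  1 / 2 - kappa γ * Real.sqrt (2 * π) / 2 * erfi (g / Real.sqrt (2 * t))

lemma fAux_continuous (γ t : ℝ) : Continuous (fAux γ t) := by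
  unfold fAux
  exact (continuous_id.div_const 2).add
    (continuous_const.mul (M0_continuous.comp ((continuous_pow 2).div_const (2 * t))))

lemma fAux_hasDerivAt {t g : ℝ} (γ : ℝ) (ht : 0 < t) (hg : 0 < g) :
    HasDerivAt (fAux γ t) (fdAux γ t g) g := by
  have hts : (0:ℝ) < Real.sqrt t := Real.sqrt_pos.2 ht
  have hs2t : (0:ℝ) < Real.sqrt (2 * t) := Real.sqrt_pos.2 (by linarith)
  have hu : 0 < g ^ 2 / (2 * t) := by positivity
  have hinner : HasDerivAt (fun x : ℝ => x ^ 2 / (2 * t)) (g / t) g := by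
    have := (hasDerivAt_pow 2 g).div_const (2 * t)
    refine this.congr_deriv ?_
    field_simp
    ring
  have hM := (M0_hasDerivAt hu).comp g hinner
  have h := ((hasDerivAt_id g).div_const 2).add (hM.const_mul (kappa γ * Real.sqrt t))
  have hsq : Real.sqrt (g ^ 2 / (2 * t)) = g / Real.sqrt (2 * t) := by
    rw [Real.sqrt_div (by positivity) (2 * t), Real.sqrt_sq hg.le]
  refine h.congr_deriv ?_
  have h2t : Real.sqrt (2 * t) = Real.sqrt 2 * Real.sqrt t := Real.sqrt_mul (by norm_num) t
  have h2π : Real.sqrt (2 * π) = Real.sqrt 2 * Real.sqrt π := Real.sqrt_mul (by norm_num) π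
  rw [hsq, fdAux, h2t, h2π]
  have hsπ : Real.sqrt π ≠ 0 := (Real.sqrt_pos.2 Real.pi_pos).ne'
  have hs2 : Real.sqrt 2 ≠ 0 := by positivity
  field_simp
  ring_nf
  rw [Real.sq_sqrt ht.le]
  ring

theorem R_monotone_concave_bounded (γ : ℝ) (hγ : 0 < γ) (hroot : M0 (γ ^ 2 / 2) = 0)
    (t : ℝ) (ht : 0 < t) :
    MonotoneOn (fun g => R γ t g) (Set.Ici 0) ∧
    ConcaveOn ℝ (Set.Ici 0) (fun g => R γ t g) ∧
    ∀ g : ℝ, 0 ≤ g → R γ t g ≤ γ * Real.sqrt t / 2 := by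
  have hts : (0:ℝ) < Real.sqrt t := Real.sqrt_pos.2 ht
  have hs2 : (0:ℝ) < Real.sqrt 2 := Real.sqrt_pos.2 (by norm_num)
  have hs2t : (0:ℝ) < Real.sqrt (2 * t) := Real.sqrt_pos.2 (by linarith)
  have hs2π : (0:ℝ) < Real.sqrt (2 * π) := Real.sqrt_pos.2 (by positivity)
  have hcpos : 0 < γ * Real.sqrt t := mul_pos hγ hts
  have hE : 0 < erfi (γ / Real.sqrt 2) := by
    have := erfi_strictMono (show (0:ℝ) < γ / Real.sqrt 2 by positivity)
    rwa [erfi_zero] at this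
  have hκ : kappa γ * Real.sqrt (2 * π) = 1 / erfi (γ / Real.sqrt 2) := by
    rw [kappa]; field_simp
  -- the border value
  have hcdiv : γ * Real.sqrt t / Real.sqrt (2 * t) = γ / Real.sqrt 2 := by
    rw [Real.sqrt_mul (by norm_num) t, mul_comm (Real.sqrt 2) (Real.sqrt t)]
    rw [← div_div, mul_div_assoc, div_self hts.ne', mul_one]
  have hc2 : (γ * Real.sqrt t) ^ 2 / (2 * t) = γ ^ 2 / 2 := by
    rw [mul_pow, Real.sq_sqrt ht.le]
    field_simp
  have hfc : fAux γ t (γ * Real.sqrt t) = γ * Real.sqrt t / 2 := by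
    rw [fAux, hc2, hroot, mul_zero, add_zero]
  have hRf : ∀ g : ℝ, g ≤ γ * Real.sqrt t → R γ t g = fAux γ t g := by
    intro g hg; simp [R, ht.ne', hg, fAux]
  have hRc : ∀ g : ℝ, ¬ g ≤ γ * Real.sqrt t → R γ t g = γ * Real.sqrt t / 2 := by
    intro g hg; simp [R, ht.ne', hg]
  have hRcval : R γ t (γ * Real.sqrt t) = γ * Real.sqrt t / 2 := by
    rw [hRf _ le_rfl, hfc]
  -- fd is zero at the border
  have hfdc : fdAux γ t (γ * Real.sqrt t) = 0 := by
    rw [fdAux, hcdiv, kappa]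
    field_simp
    ring
  -- fd is nonnegative on (-∞, border]
  have hfd_nonneg : ∀ g : ℝ, g ≤ γ * Real.sqrt t → 0 ≤ fdAux γ t g := by
    intro g hg
    have hA : erfi (g / Real.sqrt (2 * t)) ≤ erfi (γ / Real.sqrt 2) := by
      rw [← hcdiv]
      exact erfi_strictMono.monotone (by gcongr)
    have h1 : 1 / erfi (γ / Real.sqrt 2) * erfi (g / Real.sqrt (2 * t)) ≤ 1 := by
      rw [one_div_mul_eq_div, div_le_one hE]
      exact hA
    have h2 : kappa γ * Real.sqrt (2 * π) / 2 * erfi (g / Real.sqrt (2 * t)) ≤ 1 / 2 := by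
      rw [hκ]
      have h3 : 1 / erfi (γ / Real.sqrt 2) / 2 * erfi (g / Real.sqrt (2 * t))
          = (1 / erfi (γ / Real.sqrt 2) * erfi (g / Real.sqrt (2 * t))) / 2 := by ring
      rw [h3]
      linarith
    rw [fdAux]
    linarith
  -- fd is antitone
  have hfd_anti : ∀ x y : ℝ, x ≤ y → fdAux γ t y ≤ fdAux γ t x := by
    intro x y hxy
    rw [fdAux, fdAux]
    have : erfi (x / Real.sqrt (2 * t)) ≤ erfi (y / Real.sqrt (2 * t)) :=
      erfi_strictMono.monotone (by gcongr)
    have hκpos : 0 < kappa γ * Real.sqrt (2 * π) := by rw [hκ]; positivity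
    nlinarith
  -- the global derivative
  set D : ℝ → ℝ := fun g => if g < γ * Real.sqrt t then fdAux γ t g else 0 with hD
  have hD_nonneg : ∀ g : ℝ, 0 ≤ D g := by
    intro g
    by_cases h : g < γ * Real.sqrt t
    · simpa [hD, h] using hfd_nonneg g h.le
    · simp [hD, h]
  have hD_anti : ∀ x y : ℝ, x ≤ y → D y ≤ D x := by
    intro x y hxy
    by_cases hy : y < γ * Real.sqrt t
    · have hx : x < γ * Real.sqrt t := lt_of_le_of_lt hxy hy
      simp only [hD, if_pos hx, if_pos hy]
      exact hfd_anti x y hxy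
    · simp only [hD, if_neg hy]
      exact hD_nonneg x
  have hRd : ∀ g : ℝ, 0 < g → HasDerivAt (fun g => R γ t g) (D g) g := by
    intro g hg
    rcases lt_trichotomy g (γ * Real.sqrt t) with h | h | h
    · have heq : (fun g => R γ t g) =ᶠ[nhds g] fAux γ t := by
        filter_upwards [Iio_mem_nhds h] with x hx
        exact hRf x (le_of_lt hx)
      have := (fAux_hasDerivAt γ ht hg).congr_of_eventuallyEq heq
      simpa [hD, if_pos h] using this
    · subst h
      have h1 : HasDerivWithinAt (fun g => R γ t g) 0 (Set.Iic (γ * Real.sqrt t))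
          (γ * Real.sqrt t) := by
        have h0 := (fAux_hasDerivAt γ ht hg).hasDerivWithinAt
          (s := Set.Iic (γ * Real.sqrt t))
        rw [hfdc] at h0
        exact h0.congr (fun x hx => hRf x hx) (hRf _ le_rfl)
      have h2 : HasDerivWithinAt (fun g => R γ t g) 0 (Set.Ici (γ * Real.sqrt t))
          (γ * Real.sqrt t) := by
        have h0 := (hasDerivAt_const (γ * Real.sqrt t)
          (γ * Real.sqrt t / 2)).hasDerivWithinAt (s := Set.Ici (γ * Real.sqrt t))
        apply h0.congr ?_ hRcval
        intro x hx
        rcases eq_or_lt_of_le (Set.mem_Ici.1 hx) with he | hl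
        · rw [← he, hRcval]
        · exact hRc x (not_le.2 hl)
      have h3 := h1.union h2
      rw [Set.Iic_union_Ici, hasDerivWithinAt_univ] at h3
      simpa [hD, lt_irrefl] using h3
    · have heq : (fun g => R γ t g) =ᶠ[nhds g] (fun _ => γ * Real.sqrt t / 2) := by
        filter_upwards [Ioi_mem_nhds h] with x hx
        exact hRc x (not_le.2 hx)
      have := (hasDerivAt_const g (γ * Real.sqrt t / 2)).congr_of_eventuallyEq heq
      simpa [hD, if_neg (not_lt.2 h.le)] using this
  -- continuity
  have hcont : Continuous (fun g => R γ t g) := by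
    have hRif : (fun g => R γ t g) =
        fun g => if g ≤ γ * Real.sqrt t then fAux γ t g else γ * Real.sqrt t / 2 := by
      funext g
      by_cases hg : g ≤ γ * Real.sqrt t
      · rw [hRf g hg, if_pos hg]
      · rw [hRc g hg, if_neg hg]
    rw [hRif]
    apply Continuous.if_le (fAux_continuous γ t) continuous_const continuous_id
      continuous_const
    intro x hx
    simp only [id_eq] at hx
    rw [hx, hfc]
  have hint : interior (Set.Ici (0:ℝ)) = Set.Ioi 0 := interior_Ici
  have hmono : MonotoneOn (fun g => R γ t g) (Set.Ici 0) := by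
    apply monotoneOn_of_hasDerivWithinAt_nonneg (convex_Ici 0) hcont.continuousOn
      (f' := D)
    · intro x hx
      rw [hint] at hx
      exact (hRd x hx).hasDerivWithinAt
    · intro x _
      exact hD_nonneg x
  refine ⟨hmono, ?_, ?_⟩
  · apply AntitoneOn.concaveOn_of_deriv (convex_Ici 0) hcont.continuousOn
    · intro x hx
      rw [hint] at hx
      exact (hRd x hx).differentiableAt.differentiableWithinAt
    · intro x hx y hy hxy
      rw [hint] at hx hy
      rw [(hRd x hx).deriv, (hRd y hy).deriv]
      exact hD_anti x y hxy
  · intro g hg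
    by_cases hgc : g ≤ γ * Real.sqrt t
    · have h2 : R γ t g ≤ R γ t (γ * Real.sqrt t) :=
        hmono hg (Set.mem_Ici.2 hcpos.le) hgc
      rwa [hRcval] at h2
    · rw [hRc g hgc]
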